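/- In a Boolean algebra with an operator ◇, if an element c satisfies c ≤ ◇(c ∧ □¬c) (where □x = ¬◇¬x), then c = ⊥. -/
import Mathlib


/-- In a Boolean algebra with an operator `f` (with `□x = (f xᶜ)ᶜ`, so that
`□¬c = (f c)ᶜ`), if `c ≤ ◇(c ⊓ □¬c)` then `c = ⊥`. -/
theorem stmt_9 {α : Type*} [BooleanAlgebra α] (f : α → α)
    (hjoin : ∀ x y : α, f (x ⊔ y) = f x ⊔ f y) (hbot : f ⊥ = ⊥)
    (c : α) (hc : c ≤ f (c ⊓ (f c)ᶜ)) :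
    c = ⊥ := by
  have hmono : ∀ x y : α, x ≤ y → f x ≤ f y := by
    intro x y hxy
    have : f y = f x ⊔ f y := by rw [← hjoin, sup_eq_right.mpr hxy]
    rw [this]; exact le_sup_left
  set d := c ⊓ (f c)ᶜ with hd
  have h1 : f d ≤ f c := hmono _ _ inf_le_left
  have h2 : d ≤ f d := le_trans inf_le_left hc
  have h3 : d ≤ (f d)ᶜ := le_trans inf_le_right (compl_le_compl h1)
  have hdbot : d = ⊥ := le_bot_iff.mp (by
    calc d ≤ f d ⊓ (f d)ᶜ := le_inf h2 h3
    _ = ⊥ := inf_compl_eq_bot)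
  have : c ≤ ⊥ := by rw [← hbot, ← hdbot]; exact hc
  exact le_bot_iff.mp this
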